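/- arXiv:2205.13665 — 3 statements merged into one kernel-verified Lean document; each statement's English description precedes it below -/
import Mathlib

section
/- (Lemma 3.2.) Let φ(x,y) be an L(M)-formula satisfying the dual shatter condition π*_φ(k) ∈ o(k²), and suppose there exists b ∈ U^n such that φ(M,b) = ∅. Then there exists an L(M)-formula θ(y) ∈ tp(b/M) such that the set φ(U,b) realizes only finitely many φ_{θ(M)}-types, i.e. the map c ↦ {a ∈ θ(M) : U ⊨ φ(c,a)} takes only finitely many values as c ranges over φ(U,b). -/
open Filter FirstOrder FirstOrder.Language

set_option maxHeartbeats 1000000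

noncomputable def iExs32 {L : FirstOrder.Language} {α β : Type*} (γ : Type*) [Finite γ]
    (f : α → β ⊕ γ) (φ : L.Formula α) : L.Formula β :=
  Formula.iExs γ (φ.relabel f)

theorem realize_iExs32 {L : FirstOrder.Language} {M : Type*} [L.Structure M] {α β γ : Type*}
    [Finite γ] {f : α → β ⊕ γ} {φ : L.Formula α} {v : β → M} :
    (iExs32 γ f φ).Realize v ↔ ∃ i : γ → M, φ.Realize (fun a => Sum.elim v i (f a)) := by
  rw [iExs32, Formula.realize_iExs]
  exact exists_congr fun i => Formula.realize_relabel

noncomputable def iInf32 {L : FirstOrder.Language} {α β : Type*} {n : ℕ} (s : Finset β)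
    (f : β → L.BoundedFormula α n) : L.BoundedFormula α n :=
  (s.toList.map f).foldr (· ⊓ ·) ⊤

theorem realize_iInf32 {L : FirstOrder.Language} {M : Type*} [L.Structure M] {α β : Type*}
    {n : ℕ} {s : Finset β} {f : β → L.BoundedFormula α n} {v : α → M} {v' : Fin n → M} :
    (iInf32 s f).Realize v v' ↔ ∀ b ∈ s, (f b).Realize v v' := by
  simp only [iInf32, BoundedFormula.realize_foldr_inf, List.mem_map, Finset.mem_toList,
    forall_exists_index, and_imp, forall_apply_eq_imp_iff₂]

section Helpers
variable {L : FirstOrder.Language} {U : Type*} [L.Structure U]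
variable (M : L.ElementarySubstructure U) {m n : ℕ}
variable (φ : (L[[(M : Set U)]]).Formula (Fin m ⊕ Fin n))

/-- witness extraction bridge -/
lemma exists_witness32 {α : Type*} {m' : ℕ}
    (χ : (L[[(M : Set U)]]).Formula (α ⊕ Fin m')) (w : α → M)
    (h : ∃ c : Fin m' → U, χ.Realize (Sum.elim (fun i => (w i : U)) c)) :
    ∃ c : Fin m' → M, χ.Realize (Sum.elim (fun i => (w i : U)) (fun j => (c j : U))) := by
  classical
  set χ' : L.Formula ((M : Set U) ⊕ (α ⊕ Fin m')) := BoundedFormula.constantsVarsEquiv χ with hχ'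
  have key : ∀ v : α ⊕ Fin m' → U,
      χ'.Realize (Sum.elim (fun a : (M : Set U) => (a : U)) v) ↔ χ.Realize v := by
    intro v
    have := BoundedFormula.realize_constantsVarsEquiv (M := U) (φ := χ)
      (v := v) (xs := (default : Fin 0 → U))
    rw [Formula.Realize, Formula.Realize, ← this]
    have : (Sum.elim (fun a : (M : Set U) => ((L.con a : U))) v)
        = Sum.elim (fun a : (M : Set U) => (a : U)) v := by
      funext x; cases x <;> rfl
    rw [hχ', this]
  set f : ((M : Set U) ⊕ (α ⊕ Fin m')) → ((M : Set U) ⊕ α) ⊕ Fin m' :=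
    Sum.elim (Sum.inl ∘ Sum.inl) (Sum.elim (Sum.inl ∘ Sum.inr) Sum.inr) with hf
  set ξ : L.Formula ((M : Set U) ⊕ α) := iExs32 (Fin m') f χ' with hξ
  set x₀ : ((M : Set U) ⊕ α) → M := Sum.elim (fun a => ⟨a.1, a.2⟩) w with hx₀
  have hcoe : ((↑) : M → U) ∘ x₀ = Sum.elim (fun a : (M : Set U) => (a : U)) (fun i => (w i : U)) := by
    funext z; cases z <;> rfl
  have hU : ξ.Realize (((↑) : M → U) ∘ x₀) := by
    rw [hξ, realize_iExs32]
    obtain ⟨c, hc⟩ := h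
    refine ⟨c, ?_⟩
    have : (fun z => Sum.elim (((↑) : M → U) ∘ x₀) c (f z))
        = Sum.elim (fun a : (M : Set U) => (a : U)) (Sum.elim (fun i => (w i : U)) c) := by
      funext z; rcases z with z | z | z <;> simp [hf, hcoe]
    rw [this, key]
    exact hc
  have hU' : ξ.Realize x₀ := (M.subtype.map_formula ξ x₀).mp hU
  rw [realize_iExs32] at hU'
  obtain ⟨c, hc⟩ := hU'
  refine ⟨c, ?_⟩
  have hc2 : χ'.Realize (((↑) : M → U) ∘ (fun z => Sum.elim x₀ c (f z))) :=
    (M.subtype.map_formula χ' _).mpr hc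
  have : ((↑) : M → U) ∘ (fun z => Sum.elim x₀ c (f z))
      = Sum.elim (fun a : (M : Set U) => (a : U))
        (Sum.elim (fun i => (w i : U)) (fun j => (c j : U))) := by
    funext z; rcases z with z | z | z <;> rfl
  rw [this, key] at hc2
  exact hc2

/-- constant term for an element of M -/
noncomputable def conTerm32 (z : M) {β : Type*} : (L[[(M : Set U)]]).Term β :=
  (L.con (⟨z.1, z.2⟩ : (M : Set U))).term

@[simp] lemma realize_conTerm32 {β : Type*} (z : M) (v : β → U) :
    (conTerm32 M z).realize v = (z : U) := by
  rw [conTerm32, Term.realize_con]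

/-- φ(x, a) with a ∈ M^n baked in as constants; free variables x : Fin m -/
noncomputable def atomX32 (a : Fin n → M) : (L[[(M : Set U)]]).Formula (Fin m) :=
  φ.subst (Sum.elim Term.var (fun j => conTerm32 M (a j)))

@[simp] lemma realize_atomX32 {a : Fin n → M} {c : Fin m → U} {v' : Fin 0 → U} :
    BoundedFormula.Realize (atomX32 M φ a) c v' ↔
      φ.Realize (Sum.elim c (fun j => (a j : U))) := by
  rw [atomX32, BoundedFormula.realize_subst]
  have hv : (fun z => Term.realize c (Sum.elim Term.var (fun j => conTerm32 M (a j)) z))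
      = Sum.elim c (fun j => ((a j : U))) := by
    funext z; cases z <;> simp
  rw [hv, Subsingleton.elim v' default]
  rfl

/-- φ(x, y) with x ∈ M^m baked in; free variables y : Fin n -/
noncomputable def atomY32 (x : Fin m → M) : (L[[(M : Set U)]]).Formula (Fin n) :=
  φ.subst (Sum.elim (fun i => conTerm32 M (x i)) Term.var)

@[simp] lemma realize_atomY32 {x : Fin m → M} {v : Fin n → U} {v' : Fin 0 → U} :
    BoundedFormula.Realize (atomY32 M φ x) v v' ↔
      φ.Realize (Sum.elim (fun i => (x i : U)) v) := by
  rw [atomY32, BoundedFormula.realize_subst]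
  have hv : (fun z => Term.realize v (Sum.elim (fun i => conTerm32 M (x i)) Term.var z))
      = Sum.elim (fun i => ((x i : U))) v := by
    funext z; cases z <;> simp
  rw [hv, Subsingleton.elim v' default]
  rfl

open scoped Classical in
/-- the pattern formula: x has the given trace pattern over a, free vars Fin m -/
noncomputable def patt32 {k : ℕ} (a : Fin k → (Fin n → M)) (ε : Fin k → Prop) :
    (L[[(M : Set U)]]).Formula (Fin m) :=
  iInf32 Finset.univ
    (fun s : Fin k => if ε s then atomX32 M φ (a s) else (atomX32 M φ (a s)).not)

lemma realize_patt32 {k : ℕ} {a : Fin k → (Fin n → M)} {ε : Fin k → Prop} {c : Fin m → U} :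
    (patt32 M φ a ε).Realize c ↔
      ∀ s : Fin k, (φ.Realize (Sum.elim c (fun j => (a s j : U))) ↔ ε s) := by
  classical
  rw [patt32, Formula.Realize, realize_iInf32]
  constructor
  · intro h s
    have hs := h s (Finset.mem_univ s)
    by_cases hε : ε s
    · rw [if_pos hε, realize_atomX32] at hs
      exact ⟨fun _ => hε, fun _ => hs⟩
    · rw [if_neg hε, BoundedFormula.realize_not, realize_atomX32] at hs
      exact ⟨fun hr => absurd hr hs, fun hr => absurd hr hε⟩
  · intro h s _
    by_cases hε : ε s
    · rw [if_pos hε, realize_atomX32]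
      exact (h s).mpr hε
    · rw [if_neg hε, BoundedFormula.realize_not, realize_atomX32]
      exact fun hc => hε ((h s).mp hc)

/-- ∃x (patt(x) ∧ φ(x,y)), free vars Fin n -/
noncomputable def exPatt32 {k : ℕ} (a : Fin k → (Fin n → M)) (ε : Fin k → Prop) :
    (L[[(M : Set U)]]).Formula (Fin n) :=
  iExs32 (Fin m) (id : Fin n ⊕ Fin m → Fin n ⊕ Fin m)
    (((patt32 M φ a ε).relabel Sum.inr) ⊓ (φ.relabel (Sum.elim Sum.inr Sum.inl)))


lemma realize_exPattBody32 {k : ℕ} {a : Fin k → (Fin n → M)} {ε : Fin k → Prop}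
    {v : Fin n → U} {c : Fin m → U} :
    ((((patt32 M φ a ε).relabel Sum.inr) ⊓ (φ.relabel (Sum.elim Sum.inr Sum.inl))) :
        (L[[(M : Set U)]]).Formula (Fin n ⊕ Fin m)).Realize (Sum.elim v c) ↔
      ((∀ s : Fin k, (φ.Realize (Sum.elim c (fun j => (a s j : U))) ↔ ε s))
        ∧ φ.Realize (Sum.elim c v)) := by
  rw [Formula.realize_inf, Formula.realize_relabel, Formula.realize_relabel]
  rw [show (Sum.elim v c) ∘ (Sum.inr : Fin m → Fin n ⊕ Fin m) = c from rfl]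
  rw [show (Sum.elim v c) ∘ (Sum.elim Sum.inr Sum.inl : Fin m ⊕ Fin n → Fin n ⊕ Fin m)
      = Sum.elim c v by funext z; cases z <;> rfl]
  rw [realize_patt32 M φ]

lemma realize_exPatt32 {k : ℕ} {a : Fin k → (Fin n → M)} {ε : Fin k → Prop} {v : Fin n → U} :
    (exPatt32 M φ a ε).Realize v ↔
      ∃ c : Fin m → U, (∀ s : Fin k,
          (φ.Realize (Sum.elim c (fun j => (a s j : U))) ↔ ε s))
        ∧ φ.Realize (Sum.elim c v) := by
  rw [exPatt32, realize_iExs32]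
  constructor
  · rintro ⟨c, hc⟩
    rw [show (fun z => Sum.elim v c (id z)) = Sum.elim v c from rfl,
      realize_exPattBody32 M φ] at hc
    exact ⟨c, hc⟩
  · rintro ⟨c, hc⟩
    refine ⟨c, ?_⟩
    rw [show (fun z => Sum.elim v c (id z)) = Sum.elim v c from rfl,
      realize_exPattBody32 M φ]
    exact hc



theorem claim32 (b : Fin n → U)
    (hb : ∀ c : Fin m → M, ¬ φ.Realize (Sum.elim (fun j => (c j : U)) b))
    (c₀ : Fin m → U) (hc₀ : φ.Realize (Sum.elim c₀ b))
    (hcon : ∀ θ : (L[[(M : Set U)]]).Formula (Fin n), θ.Realize b →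
      ¬ (Set.range fun c : {c : Fin m → U // φ.Realize (Sum.elim c b)} =>
        {a : Fin n → M | θ.Realize (fun j => (a j : U)) ∧
          φ.Realize (Sum.elim c.1 fun j => (a j : U))}).Finite) :
    ∀ k : ℕ, ∃ (a : Fin k → (Fin n → M)) (d : Fin (k+1) → (Fin m → U))
      (x : Fin k → Fin k → (Fin m → M)),
      (∀ i, φ.Realize (Sum.elim (d i) b)) ∧
      (∀ i j, i ≠ j → ∃ s, ¬(φ.Realize (Sum.elim (d i) (fun q => (a s q : U))) ↔
          φ.Realize (Sum.elim (d j) (fun q => (a s q : U))))) ∧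
      (∀ t i : Fin k, (i:ℕ) ≤ (t:ℕ) →
          φ.Realize (Sum.elim (fun q => (x t i q : U)) (fun q => (a t q : U)))) ∧
      (∀ t i j : Fin k, (i:ℕ) ≤ (t:ℕ) → (t:ℕ) < (j:ℕ) →
          ¬ φ.Realize (Sum.elim (fun q => (x t i q : U)) (fun q => (a j q : U)))) ∧
      (∀ t i j : Fin k, (i:ℕ) ≤ (t:ℕ) → (j:ℕ) ≤ (t:ℕ) → i ≠ j → ∃ s : Fin k,
          (s:ℕ) < (t:ℕ) ∧ ¬(φ.Realize (Sum.elim (fun q => (x t i q : U)) (fun q => (a s q : U))) ↔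
            φ.Realize (Sum.elim (fun q => (x t j q : U)) (fun q => (a s q : U))))) := by
  intro k
  induction k with
  | zero =>
    refine ⟨fun t => t.elim0, fun _ => c₀, fun t => t.elim0, fun i => hc₀,
      fun i j hij => (hij (Fin.ext (by omega))).elim,
      fun t => t.elim0, fun t => t.elim0, fun t => t.elim0⟩
  | succ k ih =>
    obtain ⟨a, d, x, P1, P2, P3, P4, P5⟩ := ih
    -- the type ε i is the trace pattern of d i over a
    set ε : Fin (k+1) → Fin k → Prop :=
      fun i s => φ.Realize (Sum.elim (d i) (fun q => (a s q : U))) with hε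
    -- the formula θ
    set θ : (L[[(M : Set U)]]).Formula (Fin n) :=
      (iInf32 Finset.univ fun i : Fin (k+1) => exPatt32 M φ a (ε i)) ⊓
      (iInf32 Finset.univ fun p : Fin k × Fin k =>
        (atomY32 M φ (x p.1 p.2)).not) with hθdef
    have hθ_iff : ∀ v : Fin n → U, θ.Realize v ↔
        ((∀ i : Fin (k+1), (exPatt32 M φ a (ε i)).Realize v) ∧
         (∀ p : Fin k × Fin k,
            ¬ φ.Realize (Sum.elim (fun q => (x p.1 p.2 q : U)) v))) := by
      intro v
      rw [hθdef, Formula.Realize, BoundedFormula.realize_inf,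
        realize_iInf32, realize_iInf32]
      constructor
      · rintro ⟨h1, h2⟩
        refine ⟨fun i => h1 i (Finset.mem_univ i), fun p => ?_⟩
        have := h2 p (Finset.mem_univ p)
        rw [BoundedFormula.realize_not, realize_atomY32] at this
        exact this
      · rintro ⟨h1, h2⟩
        refine ⟨fun i _ => h1 i, fun p _ => ?_⟩
        rw [BoundedFormula.realize_not, realize_atomY32]
        exact h2 p
    have hθb : θ.Realize b := by
      rw [hθ_iff]
      exact ⟨fun i => (realize_exPatt32 M φ).mpr ⟨d i, fun s => Iff.rfl, P1 i⟩,
        fun p => hb (x p.1 p.2)⟩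
    have hinf := hcon θ hθb
    -- pigeonhole
    set D := {c : Fin m → U // φ.Realize (Sum.elim c b)} with hD
    set Sb : D → Set (Fin n → M) := fun c =>
      {a' : Fin n → M | θ.Realize (fun j => (a' j : U)) ∧
        φ.Realize (Sum.elim c.1 fun j => (a' j : U))} with hSb
    set G : D → Set (Fin k) := fun c =>
      {s | φ.Realize (Sum.elim c.1 (fun q => (a s q : U)))} with hG
    have hpig : ∃ c₁ c₂ : D, G c₁ = G c₂ ∧ Sb c₁ ≠ Sb c₂ := by
      by_contra hno
      push_neg at hno
      apply hinf
      have hsub : Set.range Sb ⊆ ⋃ T : Set (Fin k), Sb '' {c | G c = T} := by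
        rintro _ ⟨c, rfl⟩
        exact Set.mem_iUnion.mpr ⟨G c, ⟨c, rfl, rfl⟩⟩
      refine Set.Finite.subset (Set.finite_iUnion fun T => ?_) hsub
      apply Set.Subsingleton.finite
      rintro _ ⟨c1, h1, rfl⟩ _ ⟨c2, h2, rfl⟩
      exact hno c1 c2 (h1.trans h2.symm)
    obtain ⟨c₁, c₂, hGeq, hSne⟩ := hpig
    have hGiff : ∀ s : Fin k,
        (φ.Realize (Sum.elim c₁.1 (fun q => (a s q : U))) ↔
          φ.Realize (Sum.elim c₂.1 (fun q => (a s q : U)))) := by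
      intro s
      have := Set.ext_iff.mp hGeq s
      simpa [hG] using this
    have hsplit0 : ∃ a' : Fin n → M, ¬(a' ∈ Sb c₁ ↔ a' ∈ Sb c₂) := by
      by_contra hno
      push_neg at hno
      exact hSne (Set.ext fun a' => hno a')
    obtain ⟨astar, hsplit0⟩ := hsplit0
    have hmem : ∀ c : D, astar ∈ Sb c ↔ (θ.Realize (fun j => (astar j : U)) ∧
        φ.Realize (Sum.elim c.1 fun j => (astar j : U))) := fun c => Iff.rfl
    have hθa : θ.Realize (fun j => (astar j : U)) := by
      by_contra hno
      exact hsplit0 (Iff.intro (fun h => (hno h.1).elim) (fun h => (hno h.1).elim))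
    have hsplit : ¬(φ.Realize (Sum.elim c₁.1 (fun j => (astar j : U))) ↔
        φ.Realize (Sum.elim c₂.1 (fun j => (astar j : U)))) := by
      intro hiff
      exact hsplit0 (Iff.intro (fun h => ⟨h.1, hiff.mp h.2⟩) (fun h => ⟨h.1, hiff.mpr h.2⟩))
    -- WLOG: e₁ satisfies φ(·, astar), e₂ does not
    obtain ⟨e₁, e₂, he₁, he₂, hGe, hR1, hR2⟩ :
        ∃ e₁ e₂ : Fin m → U, φ.Realize (Sum.elim e₁ b) ∧ φ.Realize (Sum.elim e₂ b) ∧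
          (∀ s : Fin k, (φ.Realize (Sum.elim e₁ (fun q => (a s q : U))) ↔
            φ.Realize (Sum.elim e₂ (fun q => (a s q : U))))) ∧
          φ.Realize (Sum.elim e₁ (fun j => (astar j : U))) ∧
          ¬ φ.Realize (Sum.elim e₂ (fun j => (astar j : U))) := by
      by_cases h1 : φ.Realize (Sum.elim c₁.1 (fun j => (astar j : U)))
      · exact ⟨c₁.1, c₂.1, c₁.2, c₂.2, hGiff, h1, fun h2 => hsplit ⟨fun _ => h2, fun _ => h1⟩⟩
      · have h2 : φ.Realize (Sum.elim c₂.1 (fun j => (astar j : U))) := by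
          by_contra h2
          exact hsplit (iff_of_false h1 h2)
        exact ⟨c₂.1, c₁.1, c₂.2, c₁.2, fun s => (hGiff s).symm, h2, h1⟩
    -- new-stage witnesses in M via elementarity
    have hw : ∀ i : Fin (k+1), ∃ w : Fin m → M,
        (∀ s : Fin k, (φ.Realize (Sum.elim (fun q => (w q : U)) (fun q => (a s q : U))) ↔ ε i s))
        ∧ φ.Realize (Sum.elim (fun q => (w q : U)) (fun j => (astar j : U))) := by
      intro i
      have hex : (exPatt32 M φ a (ε i)).Realize (fun j => (astar j : U)) :=
        ((hθ_iff _).mp hθa).1 i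
      rw [realize_exPatt32] at hex
      obtain ⟨c, hc1, hc2⟩ := hex
      have hwit := exists_witness32 M
        (((patt32 M φ a (ε i)).relabel Sum.inr) ⊓ (φ.relabel (Sum.elim Sum.inr Sum.inl)))
        astar ⟨c, (realize_exPattBody32 M φ).mpr ⟨hc1, hc2⟩⟩
      obtain ⟨w, hwreal⟩ := hwit
      rw [realize_exPattBody32] at hwreal
      exact ⟨w, hwreal.1, hwreal.2⟩
    choose w hw1 hw2 using hw
    have hold : ∀ p : Fin k × Fin k,
        ¬ φ.Realize (Sum.elim (fun q => (x p.1 p.2 q : U)) (fun j => (astar j : U))) :=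
      ((hθ_iff _).mp hθa).2
    -- the new parameter tuple
    set A : Fin (k+1) → (Fin n → M) := Fin.snoc a astar with hA
    have hAc : ∀ s : Fin k, A (Fin.castSucc s) = a s := fun s => by rw [hA]; simp
    have hAl : A (Fin.last k) = astar := by rw [hA]; simp
    -- new d family
    obtain ⟨enew, heD, hnewold⟩ : ∃ enew : Fin m → U, φ.Realize (Sum.elim enew b) ∧
        ∀ i : Fin (k+1), ∃ s : Fin (k+1),
          ¬(φ.Realize (Sum.elim enew (fun q => (A s q : U))) ↔
            φ.Realize (Sum.elim (d i) (fun q => (A s q : U)))) := by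
      by_cases hcol : ∃ i₀ : Fin (k+1), ∀ s : Fin (k+1),
          (φ.Realize (Sum.elim e₁ (fun q => (A s q : U))) ↔
            φ.Realize (Sum.elim (d i₀) (fun q => (A s q : U))))
      · obtain ⟨i₀, hi₀⟩ := hcol
        refine ⟨e₂, he₂, fun i => ?_⟩
        by_cases hii : i = i₀
        · subst hii
          refine ⟨Fin.last k, ?_⟩
          rw [hAl]
          have h1 := hi₀ (Fin.last k)
          rw [hAl] at h1
          exact fun hiff => hR2 (hiff.mpr (h1.mp hR1))
        · obtain ⟨s, hs⟩ := P2 i₀ i (Ne.symm hii)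
          refine ⟨Fin.castSucc s, ?_⟩
          rw [hAc]
          have h1 := hi₀ (Fin.castSucc s)
          rw [hAc] at h1
          have h2 := hGe s
          exact fun hiff => hs ((h1.symm.trans h2).trans hiff)
      · refine ⟨e₁, he₁, fun i => ?_⟩
        by_contra hns
        exact hcol ⟨i, fun s => not_not.mp (fun hc => hns ⟨s, hc⟩)⟩
    set x' : Fin (k+1) → Fin (k+1) → (Fin m → M) := fun t i =>
      if ht : (t : ℕ) < k ∧ (i : ℕ) < k then x ⟨t, ht.1⟩ ⟨i, ht.2⟩ else w i with hx'
    have hx'pos : ∀ (t i : Fin (k+1)) (ht : (t : ℕ) < k) (hi : (i : ℕ) < k),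
        x' t i = x ⟨(t : ℕ), ht⟩ ⟨(i : ℕ), hi⟩ := fun t i ht hi => dif_pos ⟨ht, hi⟩
    have hx'neg : ∀ (t i : Fin (k+1)), ¬((t : ℕ) < k) → x' t i = w i :=
      fun t i ht => dif_neg (fun h => ht h.1)
    have hAval : ∀ (t : Fin (k+1)) (ht : (t : ℕ) < k), A t = a ⟨(t : ℕ), ht⟩ := by
      intro t ht
      have he : Fin.castSucc ⟨(t : ℕ), ht⟩ = t := Fin.ext rfl
      conv_lhs => rw [← he]
      exact hAc _
    have hAlast : ∀ (t : Fin (k+1)), ¬((t : ℕ) < k) → A t = astar := by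
      intro t ht
      have he : Fin.last k = t := Fin.ext (by have := t.isLt; simp only [Fin.val_last]; omega)
      conv_lhs => rw [← he]
      exact hAl
    refine ⟨A, Fin.snoc d enew, x', ?_, ?_, ?_, ?_, ?_⟩
    · -- P1
      intro i
      rcases Fin.eq_castSucc_or_eq_last i with ⟨i', rfl⟩ | rfl
      · rw [Fin.snoc_castSucc]; exact P1 i'
      · rw [Fin.snoc_last]; exact heD
    · -- P2
      intro i j hij
      rcases Fin.eq_castSucc_or_eq_last i with ⟨i', rfl⟩ | rfl <;>
        rcases Fin.eq_castSucc_or_eq_last j with ⟨j', rfl⟩ | rfl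
      · have hij' : i' ≠ j' := fun h => hij (by rw [h])
        obtain ⟨s, hs⟩ := P2 i' j' hij'
        refine ⟨Fin.castSucc s, ?_⟩
        rw [hAc, Fin.snoc_castSucc, Fin.snoc_castSucc]
        exact hs
      · obtain ⟨s, hs⟩ := hnewold i'
        refine ⟨s, ?_⟩
        rw [Fin.snoc_castSucc, Fin.snoc_last]
        exact fun hiff => hs hiff.symm
      · obtain ⟨s, hs⟩ := hnewold j'
        refine ⟨s, ?_⟩
        rw [Fin.snoc_castSucc, Fin.snoc_last]
        exact hs
      · exact absurd rfl hij
    · -- P3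
      intro t i hit
      by_cases ht : (t : ℕ) < k
      · have hi : (i : ℕ) < k := lt_of_le_of_lt hit ht
        rw [hx'pos t i ht hi, hAval t ht]
        exact P3 _ _ hit
      · rw [hx'neg t i ht, hAlast t ht]
        exact hw2 i
    · -- P4
      intro t i j hit htj
      have ht : (t : ℕ) < k := by have := j.isLt; omega
      have hi : (i : ℕ) < k := lt_of_le_of_lt hit ht
      rw [hx'pos t i ht hi]
      by_cases hj : (j : ℕ) < k
      · rw [hAval j hj]
        exact P4 _ _ _ hit htj
      · rw [hAlast j hj]
        exact hold ⟨⟨(t : ℕ), ht⟩, ⟨(i : ℕ), hi⟩⟩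
    · -- P5
      intro t i j hit hjt hij
      by_cases ht : (t : ℕ) < k
      · have hi : (i : ℕ) < k := lt_of_le_of_lt hit ht
        have hj : (j : ℕ) < k := lt_of_le_of_lt hjt ht
        rw [hx'pos t i ht hi, hx'pos t j ht hj]
        have hij' : (⟨(i : ℕ), hi⟩ : Fin k) ≠ ⟨(j : ℕ), hj⟩ := by
          intro h
          apply hij
          have := congrArg Fin.val h
          ext
          exact this
        obtain ⟨s, hs1, hs2⟩ := P5 ⟨(t : ℕ), ht⟩ _ _ hit hjt hij'
        refine ⟨Fin.castSucc s, hs1, ?_⟩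
        rw [hAc]
        exact hs2
      · rw [hx'neg t i ht, hx'neg t j ht]
        obtain ⟨s, hs⟩ := P2 i j hij
        refine ⟨Fin.castSucc s, ?_, ?_⟩
        · simp only [Fin.coe_castSucc]
          have := t.isLt
          have := s.isLt
          omega
        · rw [hAc]
          have h1 := hw1 i s
          have h2 := hw1 j s
          rw [hε] at h1 h2
          exact fun hiff => hs ((h1.symm.trans hiff).trans h2)
end Helpers



/-- **Lemma 3.2.** Let `M ≼ U`, and let `φ(x,y)` be an `L(M)`-formula whose dual shatter
function (computed in `M`) is `o(k²)`.  If `b ∈ U^n` satisfies `φ(M,b) = ∅`, then there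
is a formula `θ(y) ∈ tp(b/M)` such that the elements of `φ(U,b)` realize only finitely
many `φ_{θ(M)}`-types. -/
theorem lemma_3_2 {L : FirstOrder.Language} {U : Type*} [L.Structure U]
    (M : L.ElementarySubstructure U) {m n : ℕ}
    (φ : (L[[(M : Set U)]]).Formula (Fin m ⊕ Fin n))
    (hshatter : ∃ g : ℕ → ℝ,
      Tendsto (fun k : ℕ => g k / (k : ℝ) ^ 2) atTop (nhds 0) ∧
      ∀ (k : ℕ) (a : Fin k → (Fin n → M)),
        (((Set.range fun c : Fin m → M =>
          {i : Fin k | φ.Realize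
            (Sum.elim (fun j => (c j : U)) (fun j => (a i j : U)))}).ncard : ℝ) ≤ g k))
    (b : Fin n → U)
    (hb : ∀ c : Fin m → M, ¬ φ.Realize (Sum.elim (fun j => (c j : U)) b)) :
    ∃ θ : (L[[(M : Set U)]]).Formula (Fin n),
      θ.Realize b ∧
      (Set.range fun c : {c : Fin m → U // φ.Realize (Sum.elim c b)} =>
        {a : Fin n → M | θ.Realize (fun j => (a j : U)) ∧
          φ.Realize (Sum.elim c.1 fun j => (a j : U))}).Finite := by
  classical
  obtain ⟨g, hg0, hgb⟩ := hshatter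
  by_cases hD : ∃ c : Fin m → U, φ.Realize (Sum.elim c b)
  swap
  · refine ⟨⊤, ?_, ?_⟩
    · simp [Formula.Realize]
    · have : IsEmpty {c : Fin m → U // φ.Realize (Sum.elim c b)} :=
        ⟨fun c => hD ⟨c.1, c.2⟩⟩
      rw [Set.range_eq_empty]
      exact Set.finite_empty
  · obtain ⟨c₀, hc₀⟩ := hD
    by_contra hcon
    push_neg at hcon
    have C := claim32 M φ b hb c₀ hc₀ hcon
    have hev : ∀ᶠ k : ℕ in atTop, g k / (k:ℝ)^2 < 1/2 :=
      hg0.eventually (gt_mem_nhds (by norm_num))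
    obtain ⟨k, hk1, hk2⟩ := ((eventually_ge_atTop 1).and hev).exists
    obtain ⟨a, d, x, P1, P2, P3, P4, P5⟩ := C k
    set xi : (Σ t : Fin k, Fin ((t : ℕ)+1)) → (Fin m → M) :=
      fun p => x p.1 ⟨(p.2 : ℕ), lt_of_le_of_lt (Nat.lt_succ_iff.mp p.2.isLt) p.1.isLt⟩ with hxi
    set tr : (Σ t : Fin k, Fin ((t : ℕ)+1)) → Set (Fin k) :=
      fun p => {i : Fin k | φ.Realize
        (Sum.elim (fun j => (xi p j : U)) (fun j => (a i j : U)))} with htr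
    have hmemtr : ∀ (p) (s : Fin k), s ∈ tr p ↔ φ.Realize
        (Sum.elim (fun j => (xi p j : U)) (fun j => (a s j : U))) := fun p s => Iff.rfl
    have hinj : Function.Injective tr := by
      rintro ⟨t, i⟩ ⟨t', i'⟩ he
      rcases Nat.lt_trichotomy (t : ℕ) (t' : ℕ) with hlt | heq | hgt
      · exfalso
        have h1 : t' ∈ tr ⟨t', i'⟩ :=
          (hmemtr _ _).mpr (P3 t' _ (Nat.lt_succ_iff.mp i'.isLt))
        have h2 : t' ∉ tr ⟨t, i⟩ :=
          fun hm => P4 t _ t' (Nat.lt_succ_iff.mp i.isLt) hlt ((hmemtr _ _).mp hm)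
        exact h2 (he ▸ h1)
      · have htt : t = t' := Fin.ext heq
        subst htt
        by_cases hii : i = i'
        · rw [hii]
        · exfalso
          have hne : (⟨(i:ℕ), lt_of_le_of_lt (Nat.lt_succ_iff.mp i.isLt) t.isLt⟩ : Fin k) ≠
              ⟨(i':ℕ), lt_of_le_of_lt (Nat.lt_succ_iff.mp i'.isLt) t.isLt⟩ := by
            intro hc
            have hv := congrArg Fin.val hc
            exact hii (Fin.ext hv)
          obtain ⟨s, hs1, hs2⟩ := P5 t _ _ (Nat.lt_succ_iff.mp i.isLt)
            (Nat.lt_succ_iff.mp i'.isLt) hne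
          apply hs2
          have := Set.ext_iff.mp he s
          exact this
      · exfalso
        have h1 : t ∈ tr ⟨t, i⟩ :=
          (hmemtr _ _).mpr (P3 t _ (Nat.lt_succ_iff.mp i.isLt))
        have h2 : t ∉ tr ⟨t', i'⟩ :=
          fun hm => P4 t' _ t (Nat.lt_succ_iff.mp i'.isLt) hgt ((hmemtr _ _).mp hm)
        exact h2 (he ▸ h1)
    set T := Set.range (fun c : Fin m → M => {i : Fin k | φ.Realize
      (Sum.elim (fun j => (c j : U)) (fun j => (a i j : U)))}) with hT
    have hTfin : T.Finite := Set.toFinite _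
    have hrange : Set.range tr ⊆ T := by
      rintro _ ⟨p, rfl⟩
      exact ⟨xi p, rfl⟩
    have hcard1 : (Finset.univ.image tr).card = Fintype.card (Σ t : Fin k, Fin ((t:ℕ)+1)) := by
      rw [Finset.card_image_of_injective _ hinj, Finset.card_univ]
    have hsub : ↑(Finset.univ.image tr) ⊆ T := by
      rw [Finset.coe_image, Finset.coe_univ, Set.image_univ]
      exact hrange
    have hle : Fintype.card (Σ t : Fin k, Fin ((t:ℕ)+1)) ≤ T.ncard := by
      rw [← hcard1, ← Set.ncard_coe_finset]
      exact Set.ncard_le_ncard hsub hTfin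
    have hsum : Fintype.card (Σ t : Fin k, Fin ((t:ℕ)+1)) * 2 = k * (k+1) := by
      rw [Fintype.card_sigma]
      simp only [Fintype.card_fin]
      rw [Fin.sum_univ_eq_sum_range (fun i => i + 1) k]
      rw [Finset.sum_add_distrib, Finset.sum_const, Finset.card_range, smul_eq_mul, mul_one]
      rcases k with _ | k'
      · simp
      · have hgauss : (∑ i ∈ Finset.range (k'+1), i) * 2 = (k'+1) * k' := by
          simpa using Finset.sum_range_id_mul_two (k'+1)
        nlinarith [hgauss]
    have hgb' := hgb k a
    rw [← hT] at hgb'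
    have hk1' : (1:ℝ) ≤ (k:ℝ) := by exact_mod_cast hk1
    have hkpos : (0:ℝ) < (k:ℝ)^2 := by nlinarith
    have hgklt : g k < (k:ℝ)^2 / 2 := by
      have := (div_lt_iff₀ hkpos).mp hk2
      linarith
    have hcast : ((Fintype.card (Σ t : Fin k, Fin ((t:ℕ)+1)) : ℕ) : ℝ) ≤ (T.ncard : ℝ) := by
      exact_mod_cast hle
    have hcast2 : ((Fintype.card (Σ t : Fin k, Fin ((t:ℕ)+1)) : ℕ) : ℝ) * 2
        = (k:ℝ) * ((k:ℝ)+1) := by exact_mod_cast hsum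
    nlinarith [hcast, hcast2, hgb', hgklt, hk1']
end

section
/- (Quantitative claim in the proof of Lemma 3.2.) Let φ(x,y) be an L(M)-formula and b ∈ U^n with φ(M,b) = ∅. Suppose that for every L(M)-formula θ(y) ∈ tp(b/M), the set φ(U,b) realizes infinitely many φ_{θ(M)}-types. Then for every integer k ≥ 1 there exist a₁, …, a_k ∈ M^n such that the number of distinct sets {i : 1 ≤ i ≤ k, M ⊨ φ(c,a_i)}, as c ranges over M^m, is at least (k² + k)/2. In particular, the dual shatter function of φ is not in o(k²). -/
open Filter FirstOrder FirstOrder.Language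

section Aux

variable {L : FirstOrder.Language} {U : Type*} [L.Structure U] {M : L.ElementarySubstructure U}

/-- view an element of `M` as an element of the constants index set. -/
def cm (x : M) : ↥((M : Set U)) := ⟨x.1, x.2⟩

noncomputable local instance instCM : (Language.constantsOn ↥((M : Set U))).Structure M :=
  Language.constantsOn.structure (fun a => ⟨a.1, a.2⟩)

noncomputable local instance instLM : (L[[(M : Set U)]]).Structure M :=
  Language.withConstantsStructure L ↥((M : Set U))

/-- transfer of `L[[M]]`-formulas between `M` and `U`. -/
lemma downAll {α : Type*} (ψ : (L[[(M : Set U)]]).Formula α) (x : α → M) :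
    ψ.Realize (fun i => ((x i : U))) ↔ ψ.Realize x := by
  have h1 : Formula.Realize (M := M) (BoundedFormula.constantsVarsEquiv ψ)
      (Sum.elim (fun a => ((L.con a : M))) x) ↔ ψ.Realize x :=
    BoundedFormula.realize_constantsVarsEquiv
  have h2 : Formula.Realize (M := U) (BoundedFormula.constantsVarsEquiv ψ)
      (Sum.elim (fun a => ((L.con a : U))) (fun i => ((x i : U)))) ↔ ψ.Realize (fun i => ((x i : U))) :=
    BoundedFormula.realize_constantsVarsEquiv
  rw [← h1, ← h2, ← M.subtype.map_formula]
  have : ((M.subtype : M → U) ∘ Sum.elim (fun a => ((L.con a : M))) x)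
      = (Sum.elim (fun a => ((L.con a : U))) (fun i => ((x i : U))) : ↥((M : Set U)) ⊕ α → U) := by
    funext p; cases p <;> rfl
  rw [this]

variable {m n : ℕ} (φ : (L[[(M : Set U)]]).Formula (Fin m ⊕ Fin n))

/-- substitute constants for the `x`-variables -/
noncomputable def substX (c : Fin m → M) : (L[[(M : Set U)]]).Formula (Fin n) :=
  φ.subst (Sum.elim (fun i => (L.con (cm (c i))).term) Term.var)

lemma realize_substX {W : Type*} [(L[[(M : Set U)]]).Structure W] (c : Fin m → M)
    (v : Fin n → W) :
    (substX φ c).Realize v ↔ φ.Realize (Sum.elim (fun i => ((L.con (cm (c i)) : W))) v) := by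
  have ha : (fun p => (Sum.elim (fun i => (L.con (cm (c i))).term) Term.var p).realize v)
      = Sum.elim (fun i => ((L.con (cm (c i)) : W))) v := by
    funext p; cases p <;> simp
  rw [substX, Formula.Realize, BoundedFormula.realize_subst, ha, Formula.Realize]

/-- substitute constants for the `y`-variables -/
noncomputable def substY (a : Fin n → M) : (L[[(M : Set U)]]).Formula (Fin m) :=
  φ.subst (Sum.elim Term.var (fun j => (L.con (cm (a j))).term))

lemma realize_substY {W : Type*} [(L[[(M : Set U)]]).Structure W] (a : Fin n → M)
    (v : Fin m → W) :
    (substY φ a).Realize v ↔ φ.Realize (Sum.elim v (fun j => ((L.con (cm (a j)) : W)))) := by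
  have ha : (fun p => (Sum.elim Term.var (fun j => (L.con (cm (a j))).term) p).realize v)
      = Sum.elim v (fun j => ((L.con (cm (a j)) : W))) := by
    funext p; cases p <;> simp
  rw [substY, Formula.Realize, BoundedFormula.realize_subst, ha, Formula.Realize]

open scoped Classical in
/-- the formula saying: there is `x` with `φ(x,y)` and with `φ(x, aᵢ) ↔ T i` for all `i`. -/
noncomputable def patternF {t : ℕ} (a : Fin t → (Fin n → M)) (T : Fin t → Prop) :
    (L[[(M : Set U)]]).Formula (Fin n) :=
  (Formula.relabel (Sum.elim Sum.inr Sum.inl) (φ ⊓ BoundedFormula.iInf (fun i : Fin t =>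
      if T i then (substY φ (a i)).relabel Sum.inl
      else ((substY φ (a i)).not).relabel Sum.inl))).iExs
    (Fin m)

open scoped Classical in
lemma realize_patternF {W : Type*} [(L[[(M : Set U)]]).Structure W] {t : ℕ}
    (a : Fin t → (Fin n → M)) (T : Fin t → Prop) (v : Fin n → W) :
    (patternF φ a T).Realize v ↔ ∃ x : Fin m → W, φ.Realize (Sum.elim x v) ∧
      ∀ i : Fin t, (φ.Realize (Sum.elim x (fun j => ((L.con (cm (a i j)) : W)))) ↔ T i) := by
  rw [patternF, Formula.realize_iExs]
  refine exists_congr fun x => ?_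
  have ha : (fun p => Sum.elim v x (Sum.elim Sum.inr Sum.inl p))
      = (Sum.elim x v : Fin m ⊕ Fin n → W) := by funext p; cases p <;> rfl
  rw [Formula.realize_relabel, Function.comp_def, ha, Formula.realize_inf]
  refine and_congr Iff.rfl ?_
  rw [Formula.Realize, BoundedFormula.realize_iInf]
  have key : ∀ i : Fin t,
      (BoundedFormula.Realize (if T i then (substY φ (a i)).relabel Sum.inl
        else ((substY φ (a i)).not).relabel Sum.inl) (Sum.elim x v) (default : Fin 0 → W)
        ↔ (φ.Realize (Sum.elim x (fun j => ((L.con (cm (a i j)) : W)))) ↔ T i)) := by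
    intro i
    by_cases hT : T i
    · simp only [hT, if_true, iff_true]
      have h0 : BoundedFormula.Realize ((substY φ (a i)).relabel Sum.inl)
            (Sum.elim x v) (default : Fin 0 → W)
          ↔ Formula.Realize ((substY φ (a i)).relabel Sum.inl) (Sum.elim x v) := Iff.rfl
      rw [h0, Formula.realize_relabel,
        show (Sum.elim x v) ∘ (Sum.inl : Fin m → Fin m ⊕ Fin n) = x from rfl,
        realize_substY]
    · simp only [hT, if_false, iff_false]
      have h0 : BoundedFormula.Realize (((substY φ (a i)).not).relabel Sum.inl)
            (Sum.elim x v) (default : Fin 0 → W)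
          ↔ Formula.Realize (((substY φ (a i)).not).relabel Sum.inl) (Sum.elim x v) := Iff.rfl
      rw [h0, Formula.realize_relabel, Formula.realize_not,
        show (Sum.elim x v) ∘ (Sum.inl : Fin m → Fin m ⊕ Fin n) = x from rfl,
        realize_substY]
  constructor
  · intro h i
    exact (key i).mp (h i)
  · intro h i
    exact (key i).mpr (h i)


/-- the trace of `c` on the parameters `a`. -/
def TrF {t : ℕ} (a : Fin t → (Fin n → M)) (c : Fin m → U) : Fin t → Prop :=
  fun i => φ.Realize (Sum.elim c (fun j => ((a i j : U))))

example (x : M) : ((L.con (cm x) : U)) = (x : U) := rfl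

lemma main_step (b : Fin n → U)
    (hb : ∀ c : Fin m → M, ¬ φ.Realize (Sum.elim (fun j => (c j : U)) b))
    (htypes : ∀ θ : (L[[(M : Set U)]]).Formula (Fin n), θ.Realize b →
      (Set.range fun c : {c : Fin m → U // φ.Realize (Sum.elim c b)} =>
        {a : Fin n → M | θ.Realize (fun j => (a j : U)) ∧
          φ.Realize (Sum.elim c.1 fun j => (a j : U))}).Infinite) :
    ∀ t : ℕ, ∃ (a : Fin t → (Fin n → M)) (C : Finset (Fin m → M))
      (d : Fin (t+1) → {c : Fin m → U // φ.Realize (Sum.elim c b)}),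
      t*(t+1)/2 ≤ ((fun c : Fin m → M => TrF φ a (fun p => ((c p : U)))) '' ↑C).ncard ∧
      Function.Injective (fun s => TrF φ a (d s).1) := by
  classical
  intro t
  induction t with
  | zero =>
    obtain ⟨x, hx⟩ := (htypes ⊤ (by simp)).nonempty
    obtain ⟨c0, -⟩ := Set.mem_range.mp hx
    exact ⟨fun i => Fin.elim0 i, ∅, fun _ => c0, by simp,
      fun s1 s2 _ => Fin.ext (by omega)⟩
  | succ t ih =>
    obtain ⟨a, C, d, hC, hd⟩ := ih
    set Ts : Fin (t+1) → Fin t → Prop := fun s => TrF φ a (d s).1 with hTs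
    set θ : (L[[(M : Set U)]]).Formula (Fin n) :=
      (BoundedFormula.iInf (fun c : C => (substX φ (c : Fin m → M)).not)) ⊓
      (BoundedFormula.iInf (fun s : Fin (t+1) => patternF φ a (Ts s)))
      with hθ
    have hθb : θ.Realize b := by
      rw [hθ, Formula.realize_inf]
      constructor
      · rw [Formula.Realize, BoundedFormula.realize_iInf]
        intro c
        have h2 : ¬ (substX φ (c : Fin m → M)).Realize b := by
          rw [realize_substX]
          exact hb c
        exact h2
      · rw [Formula.Realize, BoundedFormula.realize_iInf]
        intro s
        have h2 : (patternF φ a (Ts s)).Realize b := by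
          rw [realize_patternF]
          exact ⟨(d s).1, (d s).2, fun i => Iff.rfl⟩
        exact h2
    have hinf := htypes θ hθb
    set F : {c : Fin m → U // φ.Realize (Sum.elim c b)} → Set (Fin n → M) :=
      fun c => {a : Fin n → M | θ.Realize (fun j => (a j : U)) ∧
          φ.Realize (Sum.elim c.1 fun j => (a j : U))} with hF
    set g : {c : Fin m → U // φ.Realize (Sum.elim c b)} → (Fin t → Prop) :=
      fun c => TrF φ a c.1 with hgdef
    have hfac : ∃ u u', g u = g u' ∧ F u ≠ F u' := by
      by_contra hcon
      push_neg at hcon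
      have hsub : Set.range F ⊆ Set.range
          (fun τ : Fin t → Prop => if hc : ∃ u, g u = τ then F hc.choose else ∅) := by
        rintro _ ⟨u, rfl⟩
        refine ⟨g u, ?_⟩
        have hex : ∃ v, g v = g u := ⟨u, rfl⟩
        show (if hc : ∃ v, g v = g u then F hc.choose else ∅) = F u
        rw [dif_pos hex]
        exact hcon _ u hex.choose_spec
      exact hinf ((Set.finite_range _).subset hsub)
    obtain ⟨u, u', hguu, hFne⟩ := hfac
    have hsym : ∃ (w w' : {c : Fin m → U // φ.Realize (Sum.elim c b)}),
        g w = g w' ∧ ∃ astar : Fin n → M, astar ∈ F w ∧ astar ∉ F w' := by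
      by_cases hss : F u ⊆ F u'
      · have h2 : ¬ F u' ⊆ F u := fun h2 => hFne (Set.Subset.antisymm hss h2)
        obtain ⟨astar, ha1, ha2⟩ := Set.not_subset.mp h2
        exact ⟨u', u, hguu.symm, astar, ha1, ha2⟩
      · obtain ⟨astar, ha1, ha2⟩ := Set.not_subset.mp hss
        exact ⟨u, u', hguu, astar, ha1, ha2⟩
    obtain ⟨w, w', hgw, astar, hmem, hnmem⟩ := hsym
    obtain ⟨hθa, hφw⟩ := hmem
    have hnφw' : ¬ φ.Realize (Sum.elim w'.1 (fun j => ((astar j : U)))) :=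
      fun h => hnmem ⟨hθa, h⟩
    rw [hθ, Formula.realize_inf] at hθa
    obtain ⟨hC1, hP1⟩ := hθa
    rw [Formula.Realize, BoundedFormula.realize_iInf] at hC1
    rw [Formula.Realize, BoundedFormula.realize_iInf] at hP1
    have hCneg : ∀ c ∈ C, ¬ φ.Realize (Sum.elim (fun p => ((c p : U))) (fun j => ((astar j : U)))) := by
      intro c hc
      have h2 : ¬ (substX φ c).Realize (fun j => ((astar j : U))) := hC1 ⟨c, hc⟩
      rw [realize_substX] at h2
      exact h2
    have hpats : ∀ s : Fin (t+1), ∃ e : Fin m → M,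
        φ.Realize (Sum.elim (fun p => ((e p : U))) (fun j => ((astar j : U)))) ∧
        ∀ i, (φ.Realize (Sum.elim (fun p => ((e p : U))) (fun j => ((a i j : U)))) ↔ Ts s i) := by
      intro s
      have hps : (patternF φ a (Ts s)).Realize (fun j => ((astar j : U))) :=
        hP1 s
      rw [downAll, realize_patternF] at hps
      obtain ⟨x, hx1, hx2⟩ := hps
      refine ⟨x, ?_, ?_⟩
      · have h2 := (downAll φ (Sum.elim x astar)).mpr hx1
        have hxa : (Sum.elim (fun p => ((x p : U))) (fun j => ((astar j : U)))
            : Fin m ⊕ Fin n → U) = fun i => ((Sum.elim x astar i : M) : U) := by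
          funext p; cases p <;> rfl
        rw [hxa]
        exact h2
      · intro i
        have h2 := hx2 i
        have h3 := downAll φ (Sum.elim x (fun j => ((L.con (cm (a i j)) : M))))
        have hxa : (Sum.elim (fun p => ((x p : U))) (fun j => ((a i j : U)))
            : Fin m ⊕ Fin n → U)
            = fun p => ((Sum.elim x (fun j => ((L.con (cm (a i j)) : M))) p : M) : U) := by
          funext p; cases p <;> rfl
        rw [hxa, h3]
        exact h2
    choose e he1 he2 using hpats
    -- the new parameter tuple
    set a' : Fin (t+1) → (Fin n → M) := Fin.snoc a astar with ha'
    have hres : ∀ (c : Fin m → U) (i : Fin t), TrF φ a' c i.castSucc = TrF φ a c i := by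
      intro c i
      simp only [TrF, ha', Fin.snoc_castSucc]
    have hlast : ∀ c : Fin m → U,
        TrF φ a' c (Fin.last t) = φ.Realize (Sum.elim c (fun j => ((astar j : U)))) := by
      intro c
      simp only [TrF, ha', Fin.snoc_last]
    have hrestr : ∀ c : Fin m → U, (fun i : Fin t => TrF φ a' c i.castSucc) = TrF φ a c :=
      fun c => funext (hres c)
    -- the new witness point
    set wnew : {c : Fin m → U // φ.Realize (Sum.elim c b)} :=
      if h : ∃ s, Ts s = g w ∧ φ.Realize (Sum.elim (d s).1 (fun j => ((astar j : U))))
      then w' else w with hwnew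
    have hwtr : TrF φ a wnew.1 = g w := by
      by_cases h : ∃ s, Ts s = g w ∧ φ.Realize (Sum.elim (d s).1 (fun j => ((astar j : U))))
      · rw [hwnew, dif_pos h]
        exact hgw.symm
      · rw [hwnew, dif_neg h]
    have hetr : ∀ s, TrF φ a (fun p => ((e s p : U))) = Ts s :=
      fun s => funext fun i => propext (he2 s i)
    refine ⟨a', C ∪ Finset.image e Finset.univ, Fin.snoc d wnew, ?_, ?_⟩
    · -- counting
      have hunion : ((C ∪ Finset.image e Finset.univ : Finset (Fin m → M)) : Set (Fin m → M))
          = ↑C ∪ Set.range e := by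
        rw [Finset.coe_union, Finset.coe_image, Finset.coe_univ, Set.image_univ]
      rw [hunion, Set.image_union]
      set f' : (Fin m → M) → (Fin (t+1) → Prop) :=
        fun c => TrF φ a' (fun p => ((c p : U))) with hf'
      set f : (Fin m → M) → (Fin t → Prop) :=
        fun c => TrF φ a (fun p => ((c p : U))) with hf
      have hdisj : Disjoint (f' '' ↑C) (f' '' Set.range e) := by
        rw [Set.disjoint_left]
        rintro τ ⟨c, hc, rfl⟩ ⟨c', ⟨s, rfl⟩, hc'⟩
        have h1 : ¬ TrF φ a' (fun p => ((c p : U))) (Fin.last t) := by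
          rw [hlast]; exact hCneg c hc
        have h2 : TrF φ a' (fun p => ((e s p : U))) (Fin.last t) := by
          rw [hlast]; exact he1 s
        exact h1 (Eq.mp (congrFun hc' (Fin.last t)) h2)
      have hfe_inj : Function.Injective (f' ∘ e) := by
        intro s1 s2 h12
        have h12' : f' (e s1) = f' (e s2) := h12
        have h1 : Ts s1 = Ts s2 := by
          rw [← hetr s1, ← hetr s2, ← hrestr (fun p => ((e s1 p : U))),
            ← hrestr (fun p => ((e s2 p : U)))]
          funext i
          rw [show TrF φ a' (fun p => ((e s1 p : U)))
              = TrF φ a' (fun p => ((e s2 p : U))) from h12']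
        exact hd h1
      have hfin1 : (f' '' (↑C : Set (Fin m → M))).Finite := C.finite_toSet.image _
      have hfin2 : (f' '' Set.range e).Finite := (Set.finite_range e).image _
      rw [Set.ncard_union_eq hdisj hfin1 hfin2]
      have hn2 : (f' '' Set.range e).ncard = t+1 := by
        rw [← Set.image_univ, ← Set.image_comp, Set.ncard_image_of_injective _ hfe_inj,
          Set.ncard_univ, Nat.card_eq_fintype_card, Fintype.card_fin]
      have hn1 : (f '' ↑C).ncard ≤ (f' '' ↑C).ncard := by
        have himg : (fun τ : Fin (t+1) → Prop => fun i : Fin t => τ i.castSucc) '' (f' '' ↑C)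
            = f '' ↑C := by
          rw [← Set.image_comp]
          apply Set.image_congr
          intro c _
          show (fun i : Fin t => TrF φ a' (fun p => ((c p : U))) i.castSucc) = f c
          rw [hf]
          exact hrestr _
        calc (f '' ↑C).ncard = ((fun τ : Fin (t+1) → Prop => fun i : Fin t => τ i.castSucc)
              '' (f' '' ↑C)).ncard := by rw [himg]
          _ ≤ (f' '' ↑C).ncard := Set.ncard_image_le hfin1
      have heven : t*(t+1) % 2 = 0 := Nat.even_iff.mp (Nat.even_mul_succ_self t)
      have hq : (t+1)*((t+1)+1) = t*(t+1)+2*(t+1) := by ring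
      omega
    · -- injectivity
      have hkey : ∀ j : Fin (t+1), TrF φ a' (d j).1 ≠ TrF φ a' wnew.1 := by
        intro j hJ
        have hTj : Ts j = g w := by
          calc Ts j = TrF φ a (d j).1 := rfl
            _ = TrF φ a wnew.1 := by
                rw [← hrestr (d j).1, ← hrestr wnew.1]
                funext i
                rw [hJ]
            _ = g w := hwtr
        have hlastP : φ.Realize (Sum.elim (d j).1 (fun jj => ((astar jj : U))))
            = φ.Realize (Sum.elim wnew.1 (fun jj => ((astar jj : U)))) := by
          have h2 := congrFun hJ (Fin.last t)
          rw [hlast, hlast] at h2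
          exact h2
        by_cases h : ∃ s, Ts s = g w ∧ φ.Realize (Sum.elim (d s).1 (fun jj => ((astar jj : U))))
        · have hwn : wnew = w' := by rw [hwnew]; exact dif_pos h
          obtain ⟨s0, hs0, hφs0⟩ := h
          have hsj : s0 = j := hd (show Ts s0 = Ts j from by rw [hs0, hTj])
          rw [hsj] at hφs0
          rw [hwn] at hlastP
          exact hnφw' (hlastP ▸ hφs0)
        · have hwn : wnew = w := by rw [hwnew, dif_neg h]
          have hndj : ¬ φ.Realize (Sum.elim (d j).1 (fun jj => ((astar jj : U)))) :=
            fun hdj => h ⟨j, hTj, hdj⟩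
          rw [hwn] at hlastP
          exact hndj (hlastP ▸ hφw)
      intro s1 s2 h12
      simp only at h12
      rcases Fin.eq_castSucc_or_eq_last s1 with ⟨j1, rfl⟩ | rfl <;>
        rcases Fin.eq_castSucc_or_eq_last s2 with ⟨j2, rfl⟩ | rfl
      · rw [Fin.snoc_castSucc, Fin.snoc_castSucc] at h12
        have h3 : TrF φ a (d j1).1 = TrF φ a (d j2).1 := by
          rw [← hrestr (d j1).1, ← hrestr (d j2).1]
          funext i
          rw [h12]
        exact congrArg Fin.castSucc (hd h3)
      · rw [Fin.snoc_castSucc, Fin.snoc_last] at h12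
        exact absurd h12 (hkey j1)
      · rw [Fin.snoc_castSucc, Fin.snoc_last] at h12
        exact absurd h12.symm (hkey j2)
      · rfl

/-- arithmetic helper -/
lemma nat_half (k : ℕ) : 2 * ((k ^ 2 + k) / 2) = k ^ 2 + k := by
  have h : k ^ 2 + k = k * (k + 1) := by ring
  obtain ⟨r, hr⟩ := Nat.even_mul_succ_self k
  omega

end Aux

/-- **The quantitative claim in the proof of Lemma 3.2.** Let `M ≼ U`, `φ(x,y)` an
`L(M)`-formula, and `b ∈ U^n` with `φ(M,b) = ∅`.  If for every `θ(y) ∈ tp(b/M)` the set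
`φ(U,b)` realizes infinitely many `φ_{θ(M)}`-types, then for every `k ≥ 1` there are
`a₁, …, a_k ∈ M^n` over which at least `(k² + k)/2` traces are realized by elements of
`M^m`; in particular the dual shatter function of `φ` is not in `o(k²)`. -/
theorem lemma_3_2_quantitative_claim {L : FirstOrder.Language} {U : Type*} [L.Structure U]
    (M : L.ElementarySubstructure U) {m n : ℕ}
    (φ : (L[[(M : Set U)]]).Formula (Fin m ⊕ Fin n))
    (b : Fin n → U)
    (hb : ∀ c : Fin m → M, ¬ φ.Realize (Sum.elim (fun j => (c j : U)) b))
    (htypes : ∀ θ : (L[[(M : Set U)]]).Formula (Fin n), θ.Realize b →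
      (Set.range fun c : {c : Fin m → U // φ.Realize (Sum.elim c b)} =>
        {a : Fin n → M | θ.Realize (fun j => (a j : U)) ∧
          φ.Realize (Sum.elim c.1 fun j => (a j : U))}).Infinite) :
    (∀ k : ℕ, 1 ≤ k → ∃ a : Fin k → (Fin n → M),
      (k ^ 2 + k) / 2 ≤
        (Set.range fun c : Fin m → M =>
          {i : Fin k | φ.Realize
            (Sum.elim (fun j => (c j : U)) (fun j => (a i j : U)))}).ncard) ∧
    ¬ ∃ g : ℕ → ℝ,
      Tendsto (fun k : ℕ => g k / (k : ℝ) ^ 2) atTop (nhds 0) ∧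
      ∀ (k : ℕ) (a : Fin k → (Fin n → M)),
        (((Set.range fun c : Fin m → M =>
          {i : Fin k | φ.Realize
            (Sum.elim (fun j => (c j : U)) (fun j => (a i j : U)))}).ncard : ℝ) ≤ g k) := by
  have part1 : ∀ k : ℕ, 1 ≤ k → ∃ a : Fin k → (Fin n → M),
      (k ^ 2 + k) / 2 ≤ (Set.range fun c : Fin m → M =>
        {i : Fin k | φ.Realize
          (Sum.elim (fun j => (c j : U)) (fun j => (a i j : U)))}).ncard := by
    intro k _
    obtain ⟨a, C, d, hC, -⟩ := main_step φ b hb htypes k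
    refine ⟨a, ?_⟩
    have hsub : (fun c : Fin m → M => TrF φ a (fun p => ((c p : U)))) '' ↑C ⊆
        Set.range (fun c : Fin m → M =>
          {i : Fin k | φ.Realize (Sum.elim (fun j => (c j : U)) (fun j => (a i j : U)))}) := by
      rintro τ ⟨c, -, rfl⟩
      exact ⟨c, rfl⟩
    have hfin : (Set.range (fun c : Fin m → M =>
        {i : Fin k | φ.Realize (Sum.elim (fun j => (c j : U)) (fun j => (a i j : U)))})).Finite :=
      Set.toFinite _
    have hle := Set.ncard_le_ncard hsub hfin
    rw [show k ^ 2 + k = k * (k + 1) from by ring]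
    exact le_trans hC hle
  refine ⟨part1, ?_⟩
  rintro ⟨g, hg0, hgb⟩
  have hhalf : ∀ k : ℕ, 1 ≤ k → (1:ℝ)/2 ≤ g k / (k:ℝ)^2 := by
    intro k hk
    obtain ⟨a, hka⟩ := part1 k hk
    have h1 : (((k ^ 2 + k) / 2 : ℕ) : ℝ) ≤ g k := by
      refine le_trans ?_ (hgb k a)
      exact_mod_cast hka
    have hev2 : 2 * ((k ^ 2 + k) / 2) = k ^ 2 + k := nat_half k
    have h2 : (((k ^ 2 + k) / 2 : ℕ) : ℝ) = ((k:ℝ)^2 + k) / 2 := by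
      have := congrArg (fun z : ℕ => (z : ℝ)) hev2
      push_cast at this
      linarith
    have hk1 : (1:ℝ) ≤ (k:ℝ) := by exact_mod_cast hk
    have hkpos : (0:ℝ) < (k:ℝ)^2 := by nlinarith
    rw [div_le_div_iff₀ (by norm_num : (0:ℝ) < 2) hkpos]
    nlinarith [h1, h2]
  have hev : ∀ᶠ k : ℕ in Filter.atTop, g k / (k:ℝ)^2 < 1/2 :=
    hg0.eventually (gt_mem_nhds (by norm_num : (0:ℝ) < 1/2))
  obtain ⟨k, hklt, hk1⟩ := (hev.and (Filter.eventually_ge_atTop 1)).exists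
  exact absurd (hhalf k hk1) (not_le.mpr hklt)
end

section
/- (Claim 3.3 in the proof of Theorem 3.1: refining θ.) Let φ(x,y) be an L(M)-formula and b ∈ U^n such that for every L(M)-formula σ(y), if the family {φ(M,a) : a ∈ σ(M)} has the finite intersection property then U ⊭ σ(b). Let θ(y) ∈ tp(b/M) be such that φ(U,b) realizes only finitely many φ_{θ(M)}-types. Then there exists θ*(y) ∈ tp(b/M) with θ*(U) ⊆ θ(U) such that for every c ∈ φ(U,b) exactly one of the following holds: (a) θ*(M) ∩ φ(c,M) = ∅; (b) for every θ'(y) ∈ tp(b/M), the set θ'(M) ∩ θ*(M) ∩ φ(c,M) is not definable. -/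
open Filter FirstOrder FirstOrder.Language

namespace Claim33Aux

open FirstOrder.Language.BoundedFormula

variable {L : FirstOrder.Language} {U : Type*} [L.Structure U]
  (M : L.ElementarySubstructure U)

noncomputable def iInfF {α β : Type*} {k : ℕ} (s : Finset β) (f : β → L.BoundedFormula α k) :
    L.BoundedFormula α k :=
  BoundedFormula.iInf (fun b : s => f b)

lemma realize_iInfF {α β : Type*} {k : ℕ} (s : Finset β) (f : β → L.BoundedFormula α k)
    (v : α → U) (xs : Fin k → U) :
    (iInfF s f).Realize v xs ↔ ∀ b ∈ s, (f b).Realize v xs := by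
  simp [iInfF]

lemma exists_witness {k : ℕ} (ψ : (L[[(M : Set U)]]).Formula (Fin k))
    (h : ∃ c : Fin k → U, ψ.Realize c) :
    ∃ c : Fin k → M, ψ.Realize (fun j => (c j : U)) := by
  obtain ⟨c, hc⟩ := h
  let ψ₀ : L.Formula ((M : Set U) ⊕ Fin k) := constantsVarsEquiv ψ
  have key : ∀ v : Fin k → U, ψ₀.Realize (Sum.elim (fun a : (M : Set U) => (a : U)) v)
      ↔ ψ.Realize v := by
    intro v
    exact realize_constantsVarsEquiv (φ := ψ) (v := v) (xs := default)
  let χ : L.Formula ((M : Set U)) := ψ₀.iExs (Fin k)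
  have hχU : χ.Realize (fun a : (M : Set U) => (a : U)) := by
    rw [Formula.realize_iExs]
    exact ⟨c, by simpa using (key c).2 hc⟩
  let κ : ((M : Set U)) → M := fun a => ⟨a.1, a.2⟩
  have hcomp : ((↑) : M → U) ∘ κ = fun a : (M : Set U) => (a : U) := rfl
  have hχM : χ.Realize κ := by
    rw [← M.subtype.map_formula χ κ]
    simpa [hcomp] using hχU
  rw [Formula.realize_iExs] at hχM
  obtain ⟨i, hi⟩ := hχM
  refine ⟨i, ?_⟩
  have h2 := (M.subtype.map_formula ψ₀ (fun a => Sum.elim κ i (id a))).2 hi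
  have hcomp2 : ⇑M.subtype ∘ (fun a => Sum.elim κ i (id a))
      = Sum.elim (fun a : (M : Set U) => (a : U)) (fun j => (i j : U)) := by
    funext a; cases a <;> rfl
  rw [hcomp2] at h2
  exact (key _).1 h2

lemma not_realize_sigma {m n : ℕ}
    (φ : (L[[(M : Set U)]]).Formula (Fin m ⊕ Fin n)) (b : Fin n → U)
    (hb : ∀ σ : (L[[(M : Set U)]]).Formula (Fin n),
      (∀ F : Finset (Fin n → M), (∀ a ∈ F, σ.Realize (fun j => (a j : U))) →
        ∃ c : Fin m → M, ∀ a ∈ F,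
          φ.Realize (Sum.elim (fun j => (c j : U)) (fun j => (a j : U)))) →
      ¬ σ.Realize b)
    (σ : (L[[(M : Set U)]]).Formula (Fin n)) (c : Fin m → U)
    (hσ : ∀ a : Fin n → M, σ.Realize (fun j => (a j : U)) →
      φ.Realize (Sum.elim c (fun j => (a j : U)))) :
    ¬ σ.Realize b := by
  apply hb σ
  intro F hF
  let tf : (Fin n → M) → (Fin m ⊕ Fin n) → (L[[(M : Set U)]]).Term (Fin m) := fun a =>
    Sum.elim Term.var (fun j => ((L.con (⟨(a j : U), (a j).2⟩ : (M : Set U))).term))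
  let sub : (Fin n → M) → (L[[(M : Set U)]]).Formula (Fin m) := fun a =>
    φ.subst (tf a)
  have hsub : ∀ (a : Fin n → M) (v : Fin m → U),
      (sub a).Realize v ↔ φ.Realize (Sum.elim v (fun j => (a j : U))) := by
    intro a v
    show BoundedFormula.Realize _ v default ↔ BoundedFormula.Realize _ _ default
    rw [BoundedFormula.realize_subst]
    have : (fun i => ((tf a) i).realize v)
        = Sum.elim v (fun j => (a j : U)) := by
      funext i; cases i with
      | inl i => rfl
      | inr j => rfl
    rw [this]
  have hc : (iInfF F sub).Realize c (default : Fin 0 → U) := by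
    rw [realize_iInfF]
    intro a ha
    exact (hsub a c).2 (hσ a (hF a ha))
  obtain ⟨c', hc'⟩ := exists_witness M (iInfF F sub) ⟨c, hc⟩
  refine ⟨c', fun a ha => ?_⟩
  have hc'' : ∀ a ∈ F, (sub a).Realize (fun j => (c' j : U)) :=
    fun a ha => (realize_iInfF F sub (fun j => (c' j : U)) default).1 hc' a ha
  exact (hsub a _).1 (hc'' a ha)

end Claim33Aux


/-- **Claim 3.3 in the proof of Theorem 3.1 (refining θ).** Let `M ≼ U`, `φ(x,y)` an
`L(M)`-formula, and `b ∈ U^n` such that no `L(M)`-formula `σ(y)` defining a consistent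
subfamily holds of `b`.  Let `θ(y) ∈ tp(b/M)` be such that `φ(U,b)` realizes only
finitely many `φ_{θ(M)}`-types.  Then there is `θ*(y) ∈ tp(b/M)` with `θ*(U) ⊆ θ(U)`
such that for every `c ∈ φ(U,b)` exactly one of the following holds:
(a) `θ*(M) ∩ φ(c,M) = ∅`; (b) for every `θ'(y) ∈ tp(b/M)` the set
`θ'(M) ∩ θ*(M) ∩ φ(c,M)` is not definable. -/
theorem claim_3_3 {L : FirstOrder.Language} {U : Type*} [L.Structure U]
    (M : L.ElementarySubstructure U) {m n : ℕ}
    (φ : (L[[(M : Set U)]]).Formula (Fin m ⊕ Fin n))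
    (b : Fin n → U)
    (hb : ∀ σ : (L[[(M : Set U)]]).Formula (Fin n),
      (∀ F : Finset (Fin n → M), (∀ a ∈ F, σ.Realize (fun j => (a j : U))) →
        ∃ c : Fin m → M, ∀ a ∈ F,
          φ.Realize (Sum.elim (fun j => (c j : U)) (fun j => (a j : U)))) →
      ¬ σ.Realize b)
    (θ : (L[[(M : Set U)]]).Formula (Fin n))
    (hθb : θ.Realize b)
    (hfin : (Set.range fun c : {c : Fin m → U // φ.Realize (Sum.elim c b)} =>
        {a : Fin n → M | θ.Realize (fun j => (a j : U)) ∧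
          φ.Realize (Sum.elim c.1 fun j => (a j : U))}).Finite) :
    ∃ θs : (L[[(M : Set U)]]).Formula (Fin n),
      θs.Realize b ∧
      (∀ a : Fin n → U, θs.Realize a → θ.Realize a) ∧
      ∀ c : Fin m → U, φ.Realize (Sum.elim c b) →
        Xor'
          ({a : Fin n → M | θs.Realize (fun j => (a j : U)) ∧
              φ.Realize (Sum.elim c fun j => (a j : U))} = ∅)
          (∀ θ' : (L[[(M : Set U)]]).Formula (Fin n), θ'.Realize b →
            ¬ ∃ σ : (L[[(M : Set U)]]).Formula (Fin n),
              {a : Fin n → M | θ'.Realize (fun j => (a j : U)) ∧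
                  θs.Realize (fun j => (a j : U)) ∧
                  φ.Realize (Sum.elim c fun j => (a j : U))} =
                {a : Fin n → M | σ.Realize (fun j => (a j : U))}) := by
  classical
  let T : (Fin m → U) → Set (Fin n → M) := fun c =>
    {a | θ.Realize (fun j => (a j : U)) ∧ φ.Realize (Sum.elim c fun j => (a j : U))}
  let Bad : Set (Fin n → M) → Prop := fun t =>
    ∃ θ' σ' : (L[[(M : Set U)]]).Formula (Fin n), θ'.Realize b ∧
      {a : Fin n → M | θ'.Realize (fun j => (a j : U)) ∧ a ∈ t} =
      {a : Fin n → M | σ'.Realize (fun j => (a j : U))}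
  let R : Set (Set (Fin n → M)) :=
    Set.range fun c : {c : Fin m → U // φ.Realize (Sum.elim c b)} => T c.1
  have hfinR : R.Finite := hfin
  have hBadfin : {t | t ∈ R ∧ Bad t}.Finite := hfinR.subset (fun t ht => ht.1)
  let Fb : Finset (Set (Fin n → M)) := hBadfin.toFinset
  let θ'c : Set (Fin n → M) → (L[[(M : Set U)]]).Formula (Fin n) := fun t =>
    if h : Bad t then h.choose else ⊤
  let σc : Set (Fin n → M) → (L[[(M : Set U)]]).Formula (Fin n) := fun t =>
    if h : Bad t then h.choose_spec.choose else ⊥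
  have hbadspec : ∀ t, Bad t → (θ'c t).Realize b ∧
      {a : Fin n → M | (θ'c t).Realize (fun j => (a j : U)) ∧ a ∈ t} =
      {a : Fin n → M | (σc t).Realize (fun j => (a j : U))} := by
    intro t h
    simp only [θ'c, σc, dif_pos h]
    exact ⟨h.choose_spec.choose_spec.1, h.choose_spec.choose_spec.2⟩
  let τ : Set (Fin n → M) → (L[[(M : Set U)]]).Formula (Fin n) := fun t =>
    (θ'c t) ⊓ (σc t).not
  let θs : (L[[(M : Set U)]]).Formula (Fin n) := θ ⊓ Claim33Aux.iInfF Fb τ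
  have hiInf : ∀ v : Fin n → U,
      Formula.Realize (Claim33Aux.iInfF Fb τ) v ↔
      ∀ t ∈ Fb, (τ t).Realize v := fun v => Claim33Aux.realize_iInfF Fb τ v default
  have hθs : ∀ v : Fin n → U, θs.Realize v ↔
      (θ.Realize v ∧ ∀ t ∈ Fb, (τ t).Realize v) := by
    intro v
    rw [show θs = θ ⊓ Claim33Aux.iInfF Fb τ from rfl, Formula.realize_inf, hiInf]
  -- τ t is realized by b for every t ∈ Fb
  have hτb : ∀ t ∈ Fb, (τ t).Realize b := by
    intro t ht
    have htB : t ∈ {t | t ∈ R ∧ Bad t} := hBadfin.mem_toFinset.1 ht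
    obtain ⟨cc, hcc⟩ := htB.1
    have hspec := hbadspec t htB.2
    rw [show τ t = (θ'c t) ⊓ (σc t).not from rfl, Formula.realize_inf, Formula.realize_not]
    refine ⟨hspec.1, ?_⟩
    apply Claim33Aux.not_realize_sigma M φ b hb (σc t) cc.1
    intro a ha
    have hat : a ∈ t := ((Set.ext_iff.1 hspec.2 a).2 ha).2
    rw [← hcc] at hat
    exact hat.2
  have hθsb : θs.Realize b := (hθs b).2 ⟨hθb, hτb⟩
  refine ⟨θs, hθsb, fun a h => ((hθs a).1 h).1, ?_⟩
  intro c hc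
  have htR : T c ∈ R := ⟨⟨c, hc⟩, rfl⟩
  have hSc : {a : Fin n → M | θs.Realize (fun j => (a j : U)) ∧
      φ.Realize (Sum.elim c fun j => (a j : U))}
      = {a : Fin n → M | θs.Realize (fun j => (a j : U)) ∧ a ∈ T c} := by
    ext a
    constructor
    · rintro ⟨h1, h2⟩
      exact ⟨h1, ⟨((hθs _).1 h1).1, h2⟩⟩
    · rintro ⟨h1, h2⟩
      exact ⟨h1, h2.2⟩
  have hbotset : {a : Fin n → M |
      (⊥ : (L[[(M : Set U)]]).Formula (Fin n)).Realize (fun j => (a j : U))} = ∅ := by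
    ext a
    simp [Formula.realize_bot]
  by_cases hB : Bad (T c)
  · have htFb : T c ∈ Fb := hBadfin.mem_toFinset.2 ⟨htR, hB⟩
    have hspec := hbadspec _ hB
    have hempty : {a : Fin n → M | θs.Realize (fun j => (a j : U)) ∧
        φ.Realize (Sum.elim c fun j => (a j : U))} = ∅ := by
      rw [hSc]
      ext a
      simp only [Set.mem_setOf_eq, Set.mem_empty_iff_false, iff_false]
      rintro ⟨h1, h2⟩
      have hτ := ((hθs _).1 h1).2 _ htFb
      rw [show τ (T c) = (θ'c (T c)) ⊓ (σc (T c)).not from rfl,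
        Formula.realize_inf, Formula.realize_not] at hτ
      exact hτ.2 ((Set.ext_iff.1 hspec.2 a).1 ⟨hτ.1, h2⟩)
    refine Or.inl ⟨hempty, ?_⟩
    intro hR2
    apply hR2 θs hθsb
    refine ⟨⊥, ?_⟩
    rw [hbotset]
    ext a
    simp only [Set.mem_setOf_eq, Set.mem_empty_iff_false, iff_false]
    rintro ⟨h1, h2, h3⟩
    exact (Set.ext_iff.1 hempty a).1 ⟨h2, h3⟩
  · refine Or.inr ⟨?_, ?_⟩
    · rintro θ' hθ'b ⟨σ, hσeq⟩
      apply hB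
      refine ⟨θ' ⊓ θs, σ, by rw [Formula.realize_inf]; exact ⟨hθ'b, hθsb⟩, ?_⟩
      rw [← hσeq]
      ext a
      simp only [Set.mem_setOf_eq, Formula.realize_inf]
      constructor
      · rintro ⟨⟨h1, h2⟩, h3⟩
        exact ⟨h1, h2, h3.2⟩
      · rintro ⟨h1, h2, h3⟩
        exact ⟨⟨h1, h2⟩, ⟨((hθs _).1 h2).1, h3⟩⟩
    · intro hempty
      apply hB
      refine ⟨θs, ⊥, hθsb, ?_⟩
      rw [hbotset, ← hSc]
      exact hempty
end
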